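/- Let α > 1 and γ = α^{-1} ∈ (0,1). If κ is an integer with 1 ≤ κ < ⌈α⌉, then ψ^{(κ)} is monotonically increasing on the interval [0, κγ/2]; that is, for all 0 ≤ x ≤ y ≤ κγ/2 one has ψ^{(κ)}(x) ≤ ψ^{(κ)}(y). -/

import Mathlib

open scoped BigOperators

noncomputable section

/-- Distance from `x` to the nearest integer. -/
def nint (x : ℝ) : ℝ := |x - round x|

/-- The set of exponents `t` such that `liminf n^t ⟦γ n⟧ = 0`. -/
def typeSet (γ : ℝ) : Set ℝ :=
  {t : ℝ | Filter.liminf (fun n : ℕ => (n : ℝ) ^ t * nint (γ * n)) Filter.atTop = 0}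

/-- An irrational number is of finite type if its type set is bounded above. -/
def IsOfFiniteType (γ : ℝ) : Prop := BddAbove (typeSet γ)

/-- The type of an irrational number. -/
def irrType (γ : ℝ) : ℝ := sSup (typeSet γ)

/-- The Beatty sequence `B_{α,β}`, as a set of positive natural numbers. -/
def BeattySet (α β : ℝ) : Set ℕ :=
  {n : ℕ | 0 < n ∧ ∃ m : ℤ, (n : ℤ) = ⌊α * m + β⌋}

/-- The 1-periodic function equal to `1` on `(0, γ]` modulo one and `0` elsewhere. -/
def psi (γ : ℝ) (x : ℝ) : ℝ := if 0 < Int.fract x ∧ Int.fract x ≤ γ then 1 else 0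

/-- `psiConv γ κ` is the `κ`-fold convolution `ψ^{(κ)}` of `psi γ` with itself. -/
def psiConv (γ : ℝ) : ℕ → ℝ → ℝ
  | 0 => fun _ => 0
  | 1 => psi γ
  | (k + 2) => fun x => ∫ y in (0:ℝ)..1, psiConv γ (k + 1) (x - y) * psi γ y

/-- The singular series `𝔖_κ(N)`. -/
def singularSeries (κ : ℕ) (N : ℕ) : ℝ :=
  (∏ p ∈ N.primeFactors, (1 + (-1 : ℝ) ^ κ / ((p : ℝ) - 1) ^ (κ - 1))) *
    (∏' p : {p : ℕ // p.Prime ∧ ¬(p ∣ N)}, (1 + (-1 : ℝ) ^ (κ + 1) / (((p : ℕ) : ℝ) - 1) ^ κ))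

open Classical in
/-- `G_κ(N) = ∑_{n₁+⋯+n_κ=N, nᵢ ∈ B_{α,β}} Λ(n₁)⋯Λ(n_κ)`. -/
def beattyG (α β : ℝ) (κ N : ℕ) : ℝ :=
  ∑ f ∈ Finset.Nat.antidiagonalTuple κ N,
    ∏ i : Fin κ, (if f i ∈ BeattySet α β then ArithmeticFunction.vonMangoldt (f i) else 0)

/-- `e(x) = e^{2πix}`. -/
def e (x : ℝ) : ℂ := Complex.exp (2 * Real.pi * Complex.I * x)

/-- The Möbius function, real-valued. -/
def mu (n : ℕ) : ℝ := ((ArithmeticFunction.moebius n : ℤ) : ℝ)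

section PsiAux

open MeasureTheory intervalIntegral Set

lemma psi_nonneg (γ x : ℝ) : 0 ≤ psi γ x := by unfold psi; split <;> norm_num

lemma psi_le_one (γ x : ℝ) : psi γ x ≤ 1 := by unfold psi; split <;> norm_num

lemma measurable_psi (γ : ℝ) : Measurable (psi γ) := by
  have h : MeasurableSet {x : ℝ | 0 < Int.fract x ∧ Int.fract x ≤ γ} :=
    (measurableSet_lt measurable_const measurable_fract).inter
      (measurableSet_le measurable_fract measurable_const)
  exact Measurable.ite h measurable_const measurable_const

lemma psi_eq_one {γ x : ℝ} (h1 : 0 < Int.fract x) (h2 : Int.fract x ≤ γ) : psi γ x = 1 :=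
  if_pos ⟨h1, h2⟩

lemma psi_eq_zero {γ x : ℝ} (h : ¬(0 < Int.fract x ∧ Int.fract x ≤ γ)) : psi γ x = 0 :=
  if_neg h

lemma bdd_intervalIntegrable {f : ℝ → ℝ} (hm : Measurable f)
    (hb : ∀ x, |f x| ≤ 1) (a b : ℝ) : IntervalIntegrable f volume a b := by
  rw [intervalIntegrable_iff]
  refine ⟨hm.aestronglyMeasurable.restrict, ?_⟩
  refine HasFiniteIntegral.restrict_of_bounded (C := 1) ?_ (ae_of_all _ fun x => by
    simpa using hb x)
  exact measure_Ioc_lt_top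

lemma fract_level_null (c : ℝ) : volume {x : ℝ | Int.fract x = c} = 0 := by
  have hsub : {x : ℝ | Int.fract x = c} ⊆ Set.range (fun n : ℤ => c + n) := by
    intro x hx
    simp only [Set.mem_setOf_eq, Int.fract] at hx
    exact ⟨⌊x⌋, by simp; linarith⟩
  exact measure_mono_null hsub ((Set.countable_range _).measure_zero _)

lemma psi_symm (γ : ℝ) (hγ0 : 0 < γ) (hγ1 : γ < 1) :
    ∀ᵐ x : ℝ, psi γ (γ - x) = psi γ x := by
  have h0 : ∀ᵐ x : ℝ, Int.fract x ≠ 0 := by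
    rw [ae_iff]; simpa using fract_level_null 0
  have hg : ∀ᵐ x : ℝ, Int.fract x ≠ γ := by
    rw [ae_iff]; simpa using fract_level_null γ
  filter_upwards [h0, hg] with x hx0 hxγ
  have ht0 : 0 < Int.fract x := lt_of_le_of_ne (Int.fract_nonneg x) (Ne.symm hx0)
  have ht1 : Int.fract x < 1 := Int.fract_lt_one x
  have hxe : ((⌊x⌋ : ℝ)) + Int.fract x = x := Int.floor_add_fract x
  have hfr : Int.fract (γ - x) = Int.fract (γ - Int.fract x) := by
    rw [show γ - x = (γ - Int.fract x) - (⌊x⌋ : ℝ) by linarith, Int.fract_sub_intCast]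
  rcases lt_or_gt_of_ne hxγ with h | h
  · have hfr2 : Int.fract (γ - Int.fract x) = γ - Int.fract x :=
      Int.fract_eq_self.mpr ⟨by linarith, by linarith⟩
    rw [psi_eq_one (by rw [hfr, hfr2]; linarith) (by rw [hfr, hfr2]; linarith),
      psi_eq_one ht0 h.le]
  · have hfr2 : Int.fract (γ - Int.fract x) = γ - Int.fract x + 1 :=
      calc Int.fract (γ - Int.fract x) = Int.fract (γ - Int.fract x + 1) :=
            (Int.fract_add_one _).symm
        _ = γ - Int.fract x + 1 := Int.fract_eq_self.mpr ⟨by linarith, by linarith⟩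
    rw [psi_eq_zero (by rw [hfr, hfr2]; intro hc; linarith [hc.2]),
      psi_eq_zero (by intro hc; linarith [hc.2])]

structure PsiInv (γ : ℝ) (j : ℕ) : Prop where
  meas : Measurable (psiConv γ j)
  nonneg : ∀ x, 0 ≤ psiConv γ j x
  le_one : ∀ x, psiConv γ j x ≤ 1
  per : ∀ x, psiConv γ j (x + 1) = psiConv γ j x
  vanish : ∀ x, (j : ℝ) * γ < x → x ≤ 1 → psiConv γ j x = 0
  symm : ∀ᵐ x : ℝ, psiConv γ j ((j : ℝ) * γ - x) = psiConv γ j x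
  mono : ∀ x y, 0 ≤ x → x ≤ y → y ≤ (j : ℝ) * γ / 2 → psiConv γ j x ≤ psiConv γ j y

lemma psiConv_one (γ : ℝ) : psiConv γ 1 = psi γ := rfl

lemma psiInv_one (γ : ℝ) (hγ0 : 0 < γ) (hγ1 : γ < 1) : PsiInv γ 1 := by
  refine ⟨?_, ?_, ?_, ?_, ?_, ?_, ?_⟩
  · rw [psiConv_one]; exact measurable_psi γ
  · intro x; rw [psiConv_one]; exact psi_nonneg γ x
  · intro x; rw [psiConv_one]; exact psi_le_one γ x
  · intro x; rw [psiConv_one]; unfold psi; rw [Int.fract_add_one]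
  · intro x h1 h2
    rw [psiConv_one]
    push_cast at h1; rw [one_mul] at h1
    rcases eq_or_lt_of_le h2 with h | h
    · exact psi_eq_zero (by rw [h]; simp)
    · have hfx : Int.fract x = x := Int.fract_eq_self.mpr ⟨by linarith, h⟩
      exact psi_eq_zero (by rw [hfx]; intro hc; linarith [hc.2])
  · rw [psiConv_one]
    push_cast
    rw [one_mul]
    exact psi_symm γ hγ0 hγ1
  · intro x y hx hxy hy
    rw [psiConv_one]
    push_cast at hy; rw [one_mul] at hy
    rcases eq_or_lt_of_le hx with h | h
    · rw [← h, psi_eq_zero (by simp)]; exact psi_nonneg γ y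
    · have hfy : Int.fract y = y := Int.fract_eq_self.mpr ⟨by linarith, by linarith⟩
      have hfx : Int.fract x = x := Int.fract_eq_self.mpr ⟨hx, by linarith⟩
      rw [psi_eq_one (by rw [hfx]; exact h) (by rw [hfx]; linarith),
        psi_eq_one (by rw [hfy]; linarith) (by rw [hfy]; linarith)]

lemma psiConv_succ_def (γ : ℝ) (k : ℕ) (x : ℝ) :
    psiConv γ (k + 2) x = ∫ y in (0:ℝ)..1, psiConv γ (k + 1) (x - y) * psi γ y := rfl

lemma conv_eq {γ : ℝ} (hγ0 : 0 < γ) (hγ1 : γ < 1) {f : ℝ → ℝ} (hm : Measurable f)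
    (hb : ∀ t, |f t| ≤ 1) (x : ℝ) :
    ∫ y in (0:ℝ)..1, f (x - y) * psi γ y = ∫ u in (x - γ)..x, f u := by
  have hmeas : Measurable fun y => f (x - y) * psi γ y :=
    (hm.comp (measurable_const.sub measurable_id)).mul (measurable_psi γ)
  have hbd : ∀ y, |f (x - y) * psi γ y| ≤ 1 := by
    intro y
    rw [abs_mul]
    calc |f (x - y)| * |psi γ y| ≤ 1 * 1 := by
          apply mul_le_mul (hb _) ?_ (abs_nonneg _) zero_le_one
          rw [abs_of_nonneg (psi_nonneg γ y)]; exact psi_le_one γ y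
      _ = 1 := mul_one 1
  have h1 : IntervalIntegrable (fun y => f (x - y) * psi γ y) volume 0 γ :=
    bdd_intervalIntegrable hmeas hbd 0 γ
  have h2 : IntervalIntegrable (fun y => f (x - y) * psi γ y) volume γ 1 :=
    bdd_intervalIntegrable hmeas hbd γ 1
  rw [← integral_add_adjacent_intervals h1 h2]
  have e2 : (∫ y in γ..(1:ℝ), f (x - y) * psi γ y) = 0 := by
    rw [intervalIntegral.integral_congr_ae (g := fun _ => (0:ℝ)) ?_, intervalIntegral.integral_zero]
    apply ae_of_all
    intro y hy
    rw [Set.uIoc_of_le hγ1.le] at hy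
    have hy1 : Int.fract y = 0 ∨ Int.fract y = y := by
      rcases eq_or_lt_of_le hy.2 with h | h
      · left; rw [h]; exact Int.fract_one
      · right; exact Int.fract_eq_self.mpr ⟨by linarith [hy.1], h⟩
    have : psi γ y = 0 := by
      rcases hy1 with h | h
      · exact psi_eq_zero (by rw [h]; simp)
      · exact psi_eq_zero (by rw [h]; intro hc; linarith [hy.1, hc.2])
    rw [this, mul_zero]
  have e1 : (∫ y in (0:ℝ)..γ, f (x - y) * psi γ y) = ∫ y in (0:ℝ)..γ, f (x - y) := by
    apply intervalIntegral.integral_congr_ae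
    apply ae_of_all
    intro y hy
    rw [Set.uIoc_of_le hγ0.le] at hy
    have hf : Int.fract y = y := Int.fract_eq_self.mpr ⟨hy.1.le, by linarith [hy.2]⟩
    rw [psi_eq_one (by rw [hf]; exact hy.1) (by rw [hf]; exact hy.2), mul_one]
  rw [e1, e2, add_zero]
  simpa using intervalIntegral.integral_comp_sub_left f x

lemma psiInv_succ {γ : ℝ} (hγ0 : 0 < γ) {j : ℕ} (hj : 1 ≤ j)
    (hκ : ((j : ℝ) + 1) * γ < 1) (H : PsiInv γ j) : PsiInv γ (j + 1) := by
  have hjR : (1 : ℝ) ≤ (j : ℝ) := by exact_mod_cast hj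
  have hγ1 : γ < 1 := by nlinarith
  have hb : ∀ t, |psiConv γ j t| ≤ 1 := fun t =>
    abs_le.mpr ⟨by linarith [H.nonneg t], H.le_one t⟩
  have key : ∀ x, psiConv γ (j + 1) x = ∫ u in (x - γ)..x, psiConv γ j u := by
    intro x
    obtain ⟨k, rfl⟩ : ∃ k, j = k + 1 := ⟨j - 1, (Nat.succ_pred_eq_of_pos hj).symm⟩
    rw [psiConv_succ_def]
    exact conv_eq hγ0 hγ1 H.meas hb x
  have fint : ∀ a b : ℝ, IntervalIntegrable (psiConv γ j) volume a b :=
    bdd_intervalIntegrable H.meas hb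
  have hcont : Continuous (psiConv γ (j + 1)) := by
    have hG : Continuous fun b => ∫ u in (0:ℝ)..b, psiConv γ j u :=
      intervalIntegral.continuous_primitive (fun a b => fint a b) 0
    have : psiConv γ (j + 1) = fun x =>
        (∫ u in (0:ℝ)..x, psiConv γ j u) - ∫ u in (0:ℝ)..(x - γ), psiConv γ j u := by
      funext x
      rw [key x, ← integral_interval_sub_left (fint 0 x) (fint 0 (x - γ))]
    rw [this]
    exact hG.sub (hG.comp (continuous_id.sub continuous_const))
  have castsucc : ((j + 1 : ℕ) : ℝ) = (j : ℝ) + 1 := by push_cast; ring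
  refine ⟨hcont.measurable, ?_, ?_, ?_, ?_, ?_, ?_⟩
  · intro x
    rw [key x]
    exact integral_nonneg (by linarith) (fun u _ => H.nonneg u)
  · intro x
    rw [key x]
    calc (∫ u in (x - γ)..x, psiConv γ j u) ≤ ∫ _u in (x - γ)..x, (1:ℝ) :=
          integral_mono_on (by linarith) (fint _ _) intervalIntegrable_const
            (fun u _ => H.le_one u)
      _ = γ := by simp
      _ ≤ 1 := hγ1.le
  · intro x
    rw [key, key, show x + 1 - γ = (x - γ) + 1 by ring, ← integral_comp_add_right _ 1]
    simp only [H.per]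
  · intro x h1 h2
    rw [castsucc] at h1
    rw [key]
    have hz : ∀ u ∈ Set.uIcc (x - γ) x, psiConv γ j u = 0 := by
      intro u hu
      rw [Set.uIcc_of_le (by linarith : x - γ ≤ x)] at hu
      exact H.vanish u (by nlinarith [hu.1]) (by linarith [hu.2])
    rw [integral_congr hz]
    simp
  · apply ae_of_all
    intro x
    rw [castsucc, key, key]
    have hl : ((j : ℝ) + 1) * γ - x - γ = (j : ℝ) * γ - x := by ring
    have hu : ((j : ℝ) + 1) * γ - x = (j : ℝ) * γ - (x - γ) := by ring
    rw [hl, hu, ← integral_comp_sub_left (psiConv γ j) ((j : ℝ) * γ)]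
    apply intervalIntegral.integral_congr_ae
    exact H.symm.mono fun v hv _ => hv
  · intro x y hx hxy hy
    rw [castsucc] at hy
    rw [key, key]
    have d1 : (∫ u in (x - γ)..x, psiConv γ j u) + ∫ u in x..y, psiConv γ j u
        = ∫ u in (x - γ)..y, psiConv γ j u :=
      integral_add_adjacent_intervals (fint _ _) (fint _ _)
    have d2 : (∫ u in (x - γ)..(y - γ), psiConv γ j u) + ∫ u in (y - γ)..y, psiConv γ j u
        = ∫ u in (x - γ)..y, psiConv γ j u :=
      integral_add_adjacent_intervals (fint _ _) (fint _ _)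
    have hshift : (∫ u in (x - γ)..(y - γ), psiConv γ j u)
        = ∫ u in x..y, psiConv γ j (u - γ) := by
      rw [integral_comp_sub_right _ γ]
    have hfint' : IntervalIntegrable (fun u => psiConv γ j (u - γ)) volume x y :=
      bdd_intervalIntegrable (H.meas.comp (measurable_id.sub measurable_const))
        (fun t => hb (t - γ)) x y
    have hae : (fun u => psiConv γ j (u - γ)) ≤ᵐ[volume.restrict (Set.Icc x y)]
        (psiConv γ j) := by
      have hsymm := ae_restrict_of_ae (s := Set.Icc x y) H.symm
      filter_upwards [hsymm, ae_restrict_mem measurableSet_Icc] with u hsym hu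
      have hu1 : x ≤ u := hu.1
      have hu2 : u ≤ y := hu.2
      by_cases huγ : u ≤ γ
      · have e : psiConv γ j (u - γ) = 0 := by
          rw [show u - γ = (u - γ + 1) - ((1:ℤ):ℝ) by push_cast; ring]
          rw [show ((u - γ + 1) - ((1:ℤ):ℝ)) = u - γ + 1 - 1 by push_cast; ring]
          have := H.per (u - γ)
          calc psiConv γ j (u - γ + 1 - 1) = psiConv γ j (u - γ + 1 - 1 + 1) :=
                (H.per _).symm
            _ = 0 := by
                apply H.vanish <;> [skip; linarith]
                have : (j : ℝ) * γ < 1 - γ := by linarith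
                linarith
        rw [e]; exact H.nonneg u
      · push_neg at huγ
        by_cases hu2' : u ≤ (j : ℝ) * γ / 2
        · exact H.mono (u - γ) u (by linarith) (by linarith) hu2'
        · push_neg at hu2'
          have step : psiConv γ j (u - γ) ≤ psiConv γ j ((j : ℝ) * γ - u) :=
            H.mono (u - γ) ((j : ℝ) * γ - u) (by linarith) (by linarith) (by linarith)
          exact step.trans (le_of_eq hsym)
    have hmono : (∫ u in x..y, psiConv γ j (u - γ)) ≤ ∫ u in x..y, psiConv γ j u :=
      integral_mono_ae_restrict hxy hfint' (fint x y) hae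
    linarith [d1, d2, hshift ▸ hmono]

end PsiAux

theorem statement18 (α : ℝ) (hα : 1 < α) (κ : ℕ) (hκ₁ : 1 ≤ κ) (hκ₂ : κ < ⌈α⌉₊)
    (x y : ℝ) (hx : 0 ≤ x) (hxy : x ≤ y) (hy : y ≤ (κ : ℝ) * α⁻¹ / 2) :
    psiConv α⁻¹ κ x ≤ psiConv α⁻¹ κ y := by
  have hα0 : 0 < α := by linarith
  have hγ0 : 0 < α⁻¹ := inv_pos.mpr hα0
  have hγ1 : α⁻¹ < 1 := inv_lt_one_of_one_lt₀ hα
  have hκα : (κ : ℝ) < α := by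
    have h1 : κ ≤ ⌈α⌉₊ - 1 := Nat.le_sub_one_of_lt hκ₂
    have h2 : (⌈α⌉₊ : ℝ) < α + 1 := Nat.ceil_lt_add_one hα0.le
    have h3 : 1 ≤ ⌈α⌉₊ := Nat.one_le_iff_ne_zero.mpr (by positivity)
    have h4 : ((⌈α⌉₊ - 1 : ℕ) : ℝ) = (⌈α⌉₊ : ℝ) - 1 := by
      push_cast [Nat.cast_sub h3]; ring
    calc (κ : ℝ) ≤ ((⌈α⌉₊ - 1 : ℕ) : ℝ) := by exact_mod_cast h1
      _ = (⌈α⌉₊ : ℝ) - 1 := h4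
      _ < α := by linarith
  have hκγ : (κ : ℝ) * α⁻¹ < 1 := by
    calc (κ : ℝ) * α⁻¹ < α * α⁻¹ := by
          exact mul_lt_mul_of_pos_right hκα hγ0
      _ = 1 := mul_inv_cancel₀ (ne_of_gt hα0)
  have main : ∀ j : ℕ, 1 ≤ j → j ≤ κ → PsiInv α⁻¹ j := by
    intro j
    induction j with
    | zero => intro h; exact absurd h (by omega)
    | succ n ih =>
      intro _ hle
      rcases Nat.eq_zero_or_pos n with hn | hn
      · subst hn; exact psiInv_one α⁻¹ hγ0 hγ1
      · have hle' : ((n : ℝ) + 1) * α⁻¹ < 1 := by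
          have : ((n + 1 : ℕ) : ℝ) ≤ (κ : ℝ) := by exact_mod_cast hle
          have hcast : ((n + 1 : ℕ) : ℝ) = (n : ℝ) + 1 := by push_cast; ring
          calc ((n : ℝ) + 1) * α⁻¹ ≤ (κ : ℝ) * α⁻¹ := by
                apply mul_le_mul_of_nonneg_right _ hγ0.le
                rw [← hcast]; exact this
            _ < 1 := hκγ
        exact psiInv_succ hγ0 hn hle' (ih hn (Nat.le_of_succ_le hle))
  exact (main κ hκ₁ le_rfl).mono x y hx hxy hy

end
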